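/- Let R : Ω → ℝ be integrable with E[R] < 0 and let b : Ω → [0,∞) be tempered. Let d_n, η_n : Ω → [0,∞) (n ∈ ℕ) be measurable functions such that d_0 is finite almost surely, η_n(ω) ≤ b(θ^n ω) for all n ≥ 1 and ω, and d_n(ω) ≤ η_n(ω) + exp(R(θ^{n−1} ω))·d_{n−1}(ω) for all n ≥ 1 and ω. If η_n → 0 in probability as n → ∞, then d_n → 0 in probability as n → ∞. -/

import Mathlib

open Filter MeasureTheory Topology
open scoped ENNReal

-- helper: a measurable real function exceeds a level with small probability
lemma exists_level_small {Ω : Type*} [MeasurableSpace Ω] (μ : Measure Ω) [IsFiniteMeasure μ]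
    (f : Ω → ℝ) (hf : Measurable f) {δ : ℝ≥0∞} (hδ : 0 < δ) :
    ∃ M : ℝ, 0 < M ∧ μ {ω | M ≤ f ω} ≤ δ := by
  have hmeas : ∀ k : ℕ, NullMeasurableSet {ω | (k : ℝ) + 1 ≤ f ω} μ := fun k =>
    (measurableSet_le measurable_const hf).nullMeasurableSet
  have hanti : Antitone (fun k : ℕ => {ω | (k : ℝ) + 1 ≤ f ω}) := by
    intro k k' hkk' ω hω
    simp only [Set.mem_setOf_eq] at hω ⊢
    have hcast : (k : ℝ) ≤ (k' : ℝ) := Nat.cast_le.2 hkk'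
    linarith
  have htend := tendsto_measure_iInter_atTop hmeas hanti ⟨0, measure_ne_top μ _⟩
  have hempty : (⋂ k : ℕ, {ω | (k : ℝ) + 1 ≤ f ω}) = ∅ := by
    ext ω
    simp only [Set.mem_iInter, Set.mem_setOf_eq, Set.mem_empty_iff_false, iff_false, not_forall,
      not_le]
    obtain ⟨k, hk⟩ := exists_nat_gt (f ω)
    exact ⟨k, by linarith⟩
  rw [hempty, measure_empty] at htend
  obtain ⟨k, hk⟩ := (htend.eventually_le_const hδ).exists
  exact ⟨(k : ℝ) + 1, by positivity, hk⟩

lemma bddAbove_birkhoff_of_neg_mean {Ω : Type*} [MeasurableSpace Ω] {μ : Measure Ω}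
    [IsProbabilityMeasure μ] {T : Ω → Ω} (hT : Ergodic T μ) {h : Ω → ℝ}
    (hm : Measurable h) (hi : Integrable h μ) (hneg : ∫ ω, h ω ∂μ < 0) :
    ∀ᵐ ω ∂μ, BddAbove (Set.range fun n : ℕ => ∑ k ∈ Finset.range n, h (T^[k] ω)) := by
  set S : ℕ → Ω → ℝ := fun n ω => ∑ k ∈ Finset.range n, h (T^[k] ω) with hS
  have hTm : Measurable T := hT.toMeasurePreserving.measurable
  have hSsucc : ∀ n ω, S (n + 1) ω = h ω + S n (T ω) := by
    intro n ω
    simp only [hS, Finset.sum_range_succ']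
    simp [Function.iterate_succ_apply, add_comm]
  have hSmeas : ∀ n, Measurable (S n) := fun n =>
    Finset.measurable_sum _ (fun k _ => hm.comp (hTm.iterate k))
  have hSint : ∀ n, Integrable (S n) μ := by
    intro n
    refine integrable_finset_sum _ (fun k _ => ?_)
    exact ((hT.toMeasurePreserving.iterate k).integrable_comp hi.aestronglyMeasurable).2 hi
  -- running max
  set M : ℕ → Ω → ℝ := fun N => Nat.rec (fun _ => (0 : ℝ))
    (fun N MN ω => max (MN ω) (S (N + 1) ω)) N with hM
  have hM0 : ∀ ω, M 0 ω = 0 := fun _ => rfl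
  have hMsucc : ∀ N ω, M (N + 1) ω = max (M N ω) (S (N + 1) ω) := fun _ _ => rfl
  have hMnonneg : ∀ N ω, 0 ≤ M N ω := by
    intro N; induction N with
    | zero => intro ω; simp [hM0]
    | succ N ih => intro ω; rw [hMsucc]; exact le_trans (ih ω) (le_max_left _ _)
  have hMmono : ∀ N ω, M N ω ≤ M (N + 1) ω := fun N ω => by
    rw [hMsucc]; exact le_max_left _ _
  have hMmeas : ∀ N, Measurable (M N) := by
    intro N; induction N with
    | zero => exact measurable_const
    | succ N ih => exact ih.max (hSmeas (N + 1))
  have hSleM : ∀ n ω, S n ω ≤ M n ω := by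
    intro n; induction n with
    | zero => intro ω; simp [hM0, hS]
    | succ n ih => intro ω; rw [hMsucc]; exact le_max_right _ _
  -- key identity (Garsia)
  have key : ∀ N ω, M (N + 1) ω = max 0 (h ω + M N (T ω)) := by
    intro N; induction N with
    | zero =>
      intro ω
      rw [hMsucc]
      simp [hM0, hSsucc 0 ω, hS, max_comm]
    | succ N ih =>
      intro ω
      calc M (N + 1 + 1) ω = max (M (N + 1) ω) (S (N + 1 + 1) ω) := rfl
        _ = max (max 0 (h ω + M N (T ω))) (h ω + S (N + 1) (T ω)) := by
              rw [ih ω, hSsucc (N + 1) ω]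
        _ = max 0 (max (h ω + M N (T ω)) (h ω + S (N + 1) (T ω))) := max_assoc _ _ _
        _ = max 0 (h ω + max (M N (T ω)) (S (N + 1) (T ω))) := by rw [max_add_add_left]
        _ = max 0 (h ω + M (N + 1) (T ω)) := by rw [← hMsucc N (T ω)]
  have hMint : ∀ N, Integrable (M N) μ := by
    intro N; induction N with
    | zero => exact (integrable_const 0).congr (Eventually.of_forall fun ω => (hM0 ω).symm)
    | succ N ih => exact ih.sup (hSint (N + 1))
  have hMTint : ∀ N, Integrable (fun ω => M N (T ω)) μ := fun N =>
    (hT.toMeasurePreserving.integrable_comp (hMint N).aestronglyMeasurable).2 (hMint N)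
  have hMTeq : ∀ N, ∫ ω, M N (T ω) ∂μ = ∫ ω, M N ω ∂μ := by
    intro N
    rw [← integral_map hTm.aemeasurable]
    · rw [hT.toMeasurePreserving.map_eq]
    · rw [hT.toMeasurePreserving.map_eq]; exact (hMint N).aestronglyMeasurable
  set A : ℕ → Set Ω := fun N => {ω | 0 < M (N + 1) ω} with hA
  have hAmeas : ∀ N, MeasurableSet (A N) := fun N =>
    measurableSet_lt measurable_const (hMmeas (N + 1))
  have hAmono : Monotone A := monotone_nat_of_le_succ fun N ω hω =>
    lt_of_lt_of_le hω (hMmono (N + 1) ω)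
  have hint_pos : ∀ N : ℕ, 0 ≤ ∫ ω in A N, h ω ∂μ := by
    intro N
    have heq : ∀ ω ∈ A N, h ω = M (N + 1) ω - M N (T ω) := by
      intro ω hω
      have hpos : (0 : ℝ) < M (N + 1) ω := hω
      rw [key N ω] at hpos
      have hx : (0 : ℝ) < h ω + M N (T ω) := by
        rcases lt_max_iff.1 hpos with h' | h'
        · exact absurd h' (lt_irrefl 0)
        · exact h'
      rw [key N ω, max_eq_right hx.le]
      ring
    have e1 : ∫ ω in A N, h ω ∂μ = ∫ ω in A N, (M (N + 1) ω - M N (T ω)) ∂μ :=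
      setIntegral_congr_fun (hAmeas N) heq
    have hsub : Integrable (fun ω => M (N + 1) ω - M N (T ω)) μ :=
      (hMint (N + 1)).sub (hMTint N)
    have e2 : ∫ ω in (A N)ᶜ, (M (N + 1) ω - M N (T ω)) ∂μ ≤ 0 := by
      refine setIntegral_nonpos (hAmeas N).compl (fun ω hω => ?_)
      have h1 : M (N + 1) ω ≤ 0 := not_lt.1 hω
      have h2 : M (N + 1) ω = 0 := le_antisymm h1 (hMnonneg (N + 1) ω)
      rw [h2]
      simpa using hMnonneg N (T ω)
    have e3 : (0 : ℝ) ≤ ∫ ω, (M (N + 1) ω - M N (T ω)) ∂μ := by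
      rw [integral_sub (hMint (N + 1)) (hMTint N), hMTeq N]
      exact sub_nonneg.2 (integral_mono (hMint N) (hMint (N + 1)) (fun ω => hMmono N ω))
    have e4 := integral_add_compl (hAmeas N) hsub
    rw [e1]
    linarith
  have hlim : Tendsto (fun N => ∫ ω in A N, h ω ∂μ) atTop
      (nhds (∫ ω in ⋃ N, A N, h ω ∂μ)) :=
    tendsto_setIntegral_of_monotone hAmeas hAmono hi.integrableOn
  have hintU : 0 ≤ ∫ ω in ⋃ N, A N, h ω ∂μ :=
    ge_of_tendsto hlim (Eventually.of_forall hint_pos)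
  -- the set of unbounded Birkhoff sums
  set B : Set Ω := ⋂ c : ℕ, ⋃ n : ℕ, {ω | (c : ℝ) < S n ω} with hB
  have hBmeas : MeasurableSet B :=
    MeasurableSet.iInter fun c => MeasurableSet.iUnion fun n =>
      measurableSet_lt measurable_const (hSmeas n)
  have hBmem : ∀ ω, ω ∈ B ↔ ∀ c : ℕ, ∃ n, (c : ℝ) < S n ω := by
    intro ω; simp [hB, Set.mem_iInter, Set.mem_iUnion]
  have hBinv : T ⁻¹' B = B := by
    ext ω
    rw [Set.mem_preimage, hBmem, hBmem]
    constructor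
    · intro hc c
      obtain ⟨n, hn⟩ := hc (c + 1 + ⌈-h ω⌉₊)
      refine ⟨n + 1, ?_⟩
      rw [hSsucc]
      have h2 : -h ω ≤ ⌈-h ω⌉₊ := Nat.le_ceil _
      push_cast at hn ⊢
      linarith
    · intro hc c
      obtain ⟨n, hn⟩ := hc (c + 1 + ⌈h ω⌉₊)
      match n with
      | 0 =>
        exfalso
        have hz : S 0 ω = 0 := by simp [hS]
        rw [hz] at hn
        have : (0:ℝ) ≤ ((c + 1 + ⌈h ω⌉₊ : ℕ) : ℝ) := Nat.cast_nonneg _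
        linarith
      | Nat.succ m =>
        refine ⟨m, ?_⟩
        rw [hSsucc] at hn
        have h2 : h ω ≤ ⌈h ω⌉₊ := Nat.le_ceil _
        push_cast at hn ⊢
        linarith
  rcases hT.toPreErgodic.measure_self_or_compl_eq_zero hBmeas hBinv with hB0 | hB1
  · -- B is null : done
    have : ∀ᵐ ω ∂μ, ω ∉ B := by
      refine (ae_iff.2 ?_)
      simpa using hB0
    filter_upwards [this] with ω hω
    rw [hBmem] at hω
    push_neg at hω
    obtain ⟨c, hc⟩ := hω
    exact ⟨(c : ℝ), by rintro x ⟨n, rfl⟩; exact hc n⟩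
  · -- B is conull : contradiction
    exfalso
    have hBsub : B ⊆ ⋃ N, A N := by
      intro ω hω
      obtain ⟨n, hn⟩ := (hBmem ω).1 hω 0
      simp only [Nat.cast_zero] at hn
      match n with
      | 0 =>
        exfalso
        have hz : S 0 ω = 0 := by simp [hS]
        rw [hz] at hn; exact lt_irrefl 0 hn
      | Nat.succ m =>
        exact Set.mem_iUnion.2 ⟨m, lt_of_lt_of_le hn (hSleM (m + 1) ω)⟩
    have hUc : μ (⋃ N, A N)ᶜ = 0 :=
      measure_mono_null (Set.compl_subset_compl.2 hBsub) hB1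
    have heqI : ∫ ω in ⋃ N, A N, h ω ∂μ = ∫ ω, h ω ∂μ := by
      rw [setIntegral_congr_set (ae_eq_univ.2 hUc), setIntegral_univ]
    rw [heqI] at hintU
    linarith

/-- A measurable function `b : Ω → [0,∞)` is *tempered* with respect to an invertible
measure-preserving transformation `θ` (with inverse `θinv`) if for a.e. `ω` one has
`(1/|n|) · log⁺ b(θⁿ ω) → 0` as `|n| → ∞` (`n ∈ ℤ`), where `log⁺ t = max (log t) 0`. -/
def IsTempered {Ω : Type*} [MeasurableSpace Ω] (μ : MeasureTheory.Measure Ω)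
    (θ θinv : Ω → Ω) (b : Ω → ℝ) : Prop :=
  ∀ᵐ ω ∂μ,
    Tendsto (fun n : ℕ => max (Real.log (b (θ^[n] ω))) 0 / (n : ℝ)) atTop (nhds 0) ∧
    Tendsto (fun n : ℕ => max (Real.log (b (θinv^[n] ω))) 0 / (n : ℝ)) atTop (nhds 0)

/-- Let `θ` be an invertible ergodic measure-preserving transformation
of a probability space, `R` integrable with `E[R] < 0`, and `b ≥ 0` tempered.  Let
`d n, η n : Ω → [0,∞)` be measurable, with `d 0` finite almost surely,
`η n ω ≤ b (θ^n ω)` for `n ≥ 1`, and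
`d n ω ≤ η n ω + exp(R (θ^{n-1} ω)) · d (n-1) ω` for all `n ≥ 1`.
If `η n → 0` in probability, then `d n → 0` in probability. -/
theorem statement6
    {Ω : Type*} [MeasurableSpace Ω] {μ : Measure Ω} [IsProbabilityMeasure μ]
    {θ θinv : Ω → Ω}
    (hinv₁ : Function.LeftInverse θinv θ) (hinv₂ : Function.RightInverse θinv θ)
    (hθ : Ergodic θ μ) (hθinv : MeasurePreserving θinv μ μ)
    {R : Ω → ℝ} (hR : Integrable R μ) (hRneg : ∫ ω, R ω ∂μ < 0)
    {b : Ω → ℝ} (hb_meas : Measurable b) (hb_nonneg : ∀ ω, 0 ≤ b ω)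
    (hb_temp : IsTempered μ θ θinv b)
    {d η : ℕ → Ω → ℝ}
    (hd_meas : ∀ n, Measurable (d n)) (hd_nonneg : ∀ n ω, 0 ≤ d n ω)
    (hη_meas : ∀ n, Measurable (η n)) (hη_nonneg : ∀ n ω, 0 ≤ η n ω)
    (hη_le : ∀ n, 1 ≤ n → ∀ ω, η n ω ≤ b (θ^[n] ω))
    (hrec : ∀ n, 1 ≤ n → ∀ ω,
      d n ω ≤ η n ω + Real.exp (R (θ^[n - 1] ω)) * d (n - 1) ω)
    (hη_tendsto : TendstoInMeasure μ η atTop 0) :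
    TendstoInMeasure μ d atTop 0 := by
  classical
  have hθm : Measurable θ := hθ.toMeasurePreserving.measurable
  have hθinvm : Measurable θinv := hθinv.measurable
  -- measurable representative of R
  set R₀ : Ω → ℝ := hR.1.mk R with hR₀def
  have hR₀m : Measurable R₀ := hR.1.stronglyMeasurable_mk.measurable
  have hRae : R =ᵐ[μ] R₀ := hR.1.ae_eq_mk
  have hR₀int : Integrable R₀ μ := hR.congr hRae
  -- iterate identities
  have L1 : ∀ (n : ℕ) (x : Ω), θ^[n] (θinv^[n] x) = x := by
    intro n
    induction n with
    | zero => intro x; simp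
    | succ n ih =>
      intro x
      rw [Function.iterate_succ_apply, Function.iterate_succ_apply' θinv, hinv₂ (θinv^[n] x), ih]
  have L2 : ∀ (j n : ℕ) (ω : Ω), j ≤ n → θ^[j] (θinv^[n] ω) = θinv^[n - j] ω := by
    intro j n ω hjn
    have hn : j + (n - j) = n := by omega
    calc θ^[j] (θinv^[n] ω) = θ^[j] (θinv^[j + (n - j)] ω) := by rw [hn]
      _ = θ^[j] (θinv^[j] (θinv^[n - j] ω)) := by rw [Function.iterate_add_apply]
      _ = θinv^[n - j] ω := L1 j _
  set lam : ℝ := -∫ ω, R ω ∂μ with hlam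
  have hlampos : 0 < lam := neg_pos.2 hRneg
  set c : ℝ := lam / 2 with hc
  have hcpos : 0 < c := by rw [hc]; linarith
  set S : ℕ → Ω → ℝ := fun l ω => ∑ k ∈ Finset.range l, R₀ (θinv^[k + 1] ω) with hSdef
  set SR : ℕ → Ω → ℝ := fun l ω => ∑ k ∈ Finset.range l, R (θinv^[k + 1] ω) with hSRdef
  have hSmeas : ∀ l, Measurable (S l) := fun l =>
    Finset.measurable_sum _ (fun k _ => hR₀m.comp (hθinvm.iterate (k + 1)))
  have hSRshift : ∀ (l : ℕ) (ω : Ω), SR (l + 1) ω = R (θinv ω) + SR l (θinv ω) := by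
    intro l ω
    rw [hSRdef]
    simp only
    rw [Finset.sum_range_succ']
    simp only [Function.iterate_succ_apply, Function.iterate_one]
    rw [add_comm]
    congr 1
  -- master inequality
  have hmaster : ∀ (n : ℕ) (ω : Ω), d n (θinv^[n] ω) ≤
      (∑ l ∈ Finset.range n, η (n - l) (θinv^[n] ω) * Real.exp (SR l ω)) +
        d 0 (θinv^[n] ω) * Real.exp (SR n ω) := by
    intro n
    induction n with
    | zero =>
      intro ω
      simp [hSRdef]
    | succ n ih =>
      intro ω
      have hy : θinv^[n + 1] ω = θinv^[n] (θinv ω) := Function.iterate_succ_apply θinv n ω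
      have hx : θ^[n] (θinv^[n + 1] ω) = θinv ω := by rw [hy]; exact L1 n (θinv ω)
      have h1 := hrec (n + 1) (by omega) (θinv^[n + 1] ω)
      simp only [Nat.add_sub_cancel] at h1
      rw [hx] at h1
      have h2 := ih (θinv ω)
      rw [← hy] at h2
      have h3 : Real.exp (R (θinv ω)) * d n (θinv^[n + 1] ω) ≤ Real.exp (R (θinv ω)) *
          ((∑ l ∈ Finset.range n, η (n - l) (θinv^[n + 1] ω) * Real.exp (SR l (θinv ω))) +
            d 0 (θinv^[n + 1] ω) * Real.exp (SR n (θinv ω))) :=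
        mul_le_mul_of_nonneg_left h2 (Real.exp_nonneg _)
      refine le_trans (le_trans h1 (add_le_add_right h3 _)) (le_of_eq ?_)
      rw [mul_add, Finset.mul_sum]
      rw [Finset.sum_range_succ'
        (fun l => η (n + 1 - l) (θinv^[n + 1] ω) * Real.exp (SR l ω)) n]
      simp only [Nat.succ_sub_succ_eq_sub, Nat.sub_zero]
      have e : ∀ l, Real.exp (R (θinv ω)) *
          (η (n - l) (θinv^[n + 1] ω) * Real.exp (SR l (θinv ω))) =
          η (n - l) (θinv^[n + 1] ω) * Real.exp (SR (l + 1) ω) := by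
        intro l; rw [hSRshift l ω, Real.exp_add]; ring
      rw [Finset.sum_congr rfl (fun l _ => e l)]
      have e2 : Real.exp (R (θinv ω)) * (d 0 (θinv^[n + 1] ω) * Real.exp (SR n (θinv ω))) =
          d 0 (θinv^[n + 1] ω) * Real.exp (SR (n + 1) ω) := by
        rw [hSRshift n ω, Real.exp_add]; ring
      rw [e2]
      have e0 : SR 0 ω = 0 := by simp [hSRdef]
      rw [e0, Real.exp_zero, mul_one]
      ring

  -- θinv is ergodic
  have hergθinv : Ergodic θinv μ := by
    refine ⟨hθinv, ⟨fun s hs hsinv => ?_⟩⟩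
    refine hθ.aeconst_set hs ?_
    have hcomp : θinv ∘ θ = id := funext hinv₁
    calc θ ⁻¹' s = θ ⁻¹' (θinv ⁻¹' s) := by rw [hsinv]
      _ = (θinv ∘ θ) ⁻¹' s := by rw [Set.preimage_comp]
      _ = s := by rw [hcomp, Set.preimage_id]
  -- a.e. upper bound on the pullback Birkhoff sums
  have hSbound : ∀ᵐ ω ∂μ, ∃ C : ℝ, ∀ l : ℕ, S l ω ≤ C - c * l := by
    have hh : Measurable (fun x => R₀ (θinv x) + c) := (hR₀m.comp hθinvm).add measurable_const
    have h1 : Integrable (fun x => R₀ (θinv x)) μ :=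
      (hθinv.integrable_comp hR₀m.aestronglyMeasurable).2 hR₀int
    have hhint : Integrable (fun x => R₀ (θinv x) + c) μ := h1.add (integrable_const c)
    have hR₀comp : ∫ x, R₀ (θinv x) ∂μ = ∫ x, R₀ x ∂μ := by
      rw [← integral_map hθinvm.aemeasurable]
      · rw [hθinv.map_eq]
      · rw [hθinv.map_eq]; exact hR₀m.aestronglyMeasurable
    have hint : ∫ x, (R₀ (θinv x) + c) ∂μ < 0 := by
      rw [integral_add h1 (integrable_const c), integral_const]
      have : ∫ x, R₀ (θinv x) ∂μ = ∫ x, R x ∂μ := by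
        rw [hR₀comp]; exact integral_congr_ae hRae.symm
      rw [this]
      simp only [probReal_univ, smul_eq_mul, one_mul]
      have : ∫ x, R x ∂μ = -lam := by rw [hlam]; ring
      rw [this, hc]
      linarith
    have hbdd := bddAbove_birkhoff_of_neg_mean hergθinv hh hhint hint
    filter_upwards [hbdd] with ω ⟨C, hC⟩
    refine ⟨C, fun l => ?_⟩
    have hmem := hC (Set.mem_range_self l)
    have hsum : ∑ k ∈ Finset.range l, (R₀ (θinv (θinv^[k] ω)) + c) = S l ω + c * l := by
      rw [Finset.sum_add_distrib, Finset.sum_const, Finset.card_range, nsmul_eq_mul]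
      have : ∀ k, R₀ (θinv (θinv^[k] ω)) = R₀ (θinv^[k + 1] ω) := fun k => by
        rw [Function.iterate_succ_apply' θinv k ω]
      rw [Finset.sum_congr rfl (fun k _ => this k)]
      rw [hSdef]
      ring
    rw [hsum] at hmem
    linarith

  -- temperedness along θinv
  have hbbound : ∀ᵐ ω ∂μ, ∃ C' : ℝ, 0 < C' ∧
      ∀ l : ℕ, b (θinv^[l] ω) ≤ C' * Real.exp (c / 2 * l) := by
    filter_upwards [hb_temp] with ω hω
    set q : ℕ → ℝ := fun l => max (Real.log (b (θinv^[l] ω))) 0 with hq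
    have h2 : Tendsto (fun l : ℕ => q l / l) atTop (𝓝 0) := hω.2
    have ha : Tendsto (fun l : ℕ => q l / l - c / 2) atTop (𝓝 (0 - c / 2)) :=
      h2.sub_const _
    have hbb : Tendsto (fun l : ℕ => (q l / l - c / 2) * l) atTop atBot :=
      Tendsto.neg_mul_atTop (by linarith) ha tendsto_natCast_atTop_atTop
    have heq : (fun l : ℕ => (q l / l - c / 2) * l) =ᶠ[atTop]
        (fun l : ℕ => q l - c / 2 * l) := by
      filter_upwards [eventually_ge_atTop 1] with l hl
      have hl0 : (l : ℝ) ≠ 0 := Nat.cast_ne_zero.2 (by omega)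
      field_simp
    have hbb2 : Tendsto (fun l : ℕ => q l - c / 2 * l) atTop atBot := hbb.congr' heq
    have hv : Tendsto (fun l : ℕ => Real.exp (q l - c / 2 * l)) atTop (𝓝 0) :=
      Real.tendsto_exp_atBot.comp hbb2
    obtain ⟨C', hC'⟩ := hv.bddAbove_range
    refine ⟨max C' 1, lt_of_lt_of_le zero_lt_one (le_max_right _ _), fun l => ?_⟩
    have hble : b (θinv^[l] ω) ≤ Real.exp (q l) := by
      rcases eq_or_lt_of_le (hb_nonneg (θinv^[l] ω)) with h0 | h0
      · rw [← h0]; positivity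
      · calc b (θinv^[l] ω) = Real.exp (Real.log (b (θinv^[l] ω))) :=
              (Real.exp_log h0).symm
          _ ≤ Real.exp (q l) := Real.exp_le_exp.2 (le_max_left _ _)
    have hCl : Real.exp (q l - c / 2 * l) ≤ C' := hC' (Set.mem_range_self l)
    calc b (θinv^[l] ω) ≤ Real.exp (q l) := hble
      _ = Real.exp (q l - c / 2 * l) * Real.exp (c / 2 * l) := by
          rw [← Real.exp_add]; ring_nf
      _ ≤ C' * Real.exp (c / 2 * l) :=
          mul_le_mul_of_nonneg_right hCl (Real.exp_nonneg _)
      _ ≤ max C' 1 * Real.exp (c / 2 * l) :=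
          mul_le_mul_of_nonneg_right (le_max_left _ _) (Real.exp_nonneg _)

  -- a.e. agreement of S and SR
  have hSRS : ∀ᵐ ω ∂μ, ∀ l, SR l ω = S l ω := by
    have hsingle : ∀ k : ℕ, (fun ω => R (θinv^[k + 1] ω)) =ᵐ[μ]
        (fun ω => R₀ (θinv^[k + 1] ω)) := fun k =>
      (hθinv.iterate (k + 1)).quasiMeasurePreserving.ae_eq_comp hRae
    have hall : ∀ᵐ ω ∂μ, ∀ k : ℕ, R (θinv^[k + 1] ω) = R₀ (θinv^[k + 1] ω) :=
      ae_all_iff.2 hsingle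
    filter_upwards [hall] with ω hω l
    exact Finset.sum_congr rfl (fun k _ => hω k)

  set F : ℕ → Ω → ℝ≥0∞ :=
    fun l ω => ENNReal.ofReal (b (θinv^[l] ω) * Real.exp (S l ω)) with hFdef
  set tail : ℕ → Ω → ℝ≥0∞ := fun m ω => ∑' l, if m < l then F l ω else 0 with htaildef
  have htailmeas : ∀ m, Measurable (tail m) := by
    intro m
    refine Measurable.ennreal_tsum (fun l => ?_)
    by_cases h : m < l
    · simpa [h] using ((hb_meas.comp (hθinvm.iterate l)).mul (hSmeas l).exp).ennreal_ofReal
    · simp [h]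
  have htailanti : ∀ ω, Antitone (fun m => tail m ω) := by
    intro ω m m' hmm'
    refine ENNReal.tsum_le_tsum (fun l => ?_)
    by_cases h : m' < l
    · simp [h, lt_of_le_of_lt hmm' h]
    · simp [h]
  have htail0 : ∀ᵐ ω ∂μ, Tendsto (fun m => tail m ω) atTop (𝓝 0) := by
    filter_upwards [hSbound, hbbound] with ω hCex hC'ex
    obtain ⟨C, hC⟩ := hCex
    obtain ⟨C', hC'pos, hC'⟩ := hC'ex
    set A : ℝ := C' * Real.exp C with hA
    have hApos : 0 < A := by positivity
    set r : ℝ := Real.exp (-(c / 2)) with hr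
    have hrpos : 0 < r := Real.exp_pos _
    have hr1 : r < 1 := Real.exp_lt_one_iff.2 (by linarith)
    set g : ℕ → ℝ≥0∞ := fun l => ENNReal.ofReal (A * r ^ l) with hg
    have hterm : ∀ l, F l ω ≤ g l := by
      intro l
      rw [hFdef, hg]
      refine ENNReal.ofReal_le_ofReal ?_
      have h1 : b (θinv^[l] ω) * Real.exp (S l ω) ≤
          (C' * Real.exp (c / 2 * l)) * Real.exp (C - c * l) := by
        refine mul_le_mul (hC' l) (Real.exp_le_exp.2 (hC l)) (Real.exp_nonneg _) ?_
        positivity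
      refine le_trans h1 (le_of_eq ?_)
      rw [hr, hA, ← Real.exp_nat_mul]
      rw [mul_assoc, ← Real.exp_add, mul_assoc, ← Real.exp_add]
      congr 2
      ring
    have hgnonneg : ∀ l : ℕ, 0 ≤ A * r ^ l := fun l => by positivity
    have hgsum : Summable (fun l : ℕ => A * r ^ l) :=
      (summable_geometric_of_lt_one hrpos.le hr1).mul_left A
    have hgfin : (∑' l, g l) ≠ ∞ := by
      rw [hg, ← ENNReal.ofReal_tsum_of_nonneg hgnonneg hgsum]
      exact ENNReal.ofReal_ne_top
    have hshift : Tendsto (fun m => ∑' i : ℕ, g (i + m)) atTop (𝓝 0) :=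
      ENNReal.tendsto_sum_nat_add g hgfin
    have hshift1 : Tendsto (fun m => ∑' i : ℕ, g (i + (m + 1))) atTop (𝓝 0) :=
      hshift.comp (tendsto_add_atTop_nat 1)
    refine tendsto_of_tendsto_of_tendsto_of_le_of_le tendsto_const_nhds hshift1
      (fun m => zero_le) (fun m => ?_)
    have hb1 : tail m ω ≤ ∑' l, if m < l then g l else 0 := by
      rw [htaildef]
      refine ENNReal.tsum_le_tsum (fun l => ?_)
      by_cases h : m < l
      · simpa [h] using hterm l
      · simp [h]
    have hb2 : (∑' l, if m < l then g l else 0) = ∑' i : ℕ, g (i + (m + 1)) := by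
      have hinj : Function.Injective (fun i : ℕ => i + (m + 1)) :=
        fun a b hab => by simpa using hab
      have hsupp : Function.support (fun l => if m < l then g l else 0) ⊆
          Set.range (fun i : ℕ => i + (m + 1)) := by
        intro l hl
        by_cases h : m < l
        · exact ⟨l - (m + 1), show l - (m + 1) + (m + 1) = l by omega⟩
        · simp [h] at hl
      have := hinj.tsum_eq hsupp
      rw [← this]
      refine tsum_congr (fun i => ?_)
      show (if m < i + (m + 1) then g (i + (m + 1)) else 0) = g (i + (m + 1))
      rw [if_pos (by omega)]
    rw [hb2] at hb1
    exact hb1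

  have hexpS0 : ∀ᵐ ω ∂μ, Tendsto (fun n => Real.exp (S n ω)) atTop (𝓝 0) := by
    filter_upwards [hSbound] with ω hCex
    obtain ⟨C, hC⟩ := hCex
    have h1 : Tendsto (fun n : ℕ => c * n) atTop atTop :=
      Tendsto.const_mul_atTop hcpos tendsto_natCast_atTop_atTop
    have h2 : Tendsto (fun n : ℕ => C - c * n) atTop atBot :=
      tendsto_atBot_add_const_left atTop C (tendsto_neg_atTop_atBot.comp h1)
    have h3 : Tendsto (fun n : ℕ => Real.exp (C - c * n)) atTop (𝓝 0) :=
      Real.tendsto_exp_atBot.comp h2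
    refine squeeze_zero (fun n => Real.exp_nonneg _) (fun n => ?_) h3
    exact Real.exp_le_exp.2 (hC n)

  -- the main estimate
  refine tendstoInMeasure_iff_dist.2 ?_
  intro ε hε
  rw [ENNReal.tendsto_nhds_zero]
  intro δ hδ
  have hδ8 : (0 : ℝ≥0∞) < δ / 8 := ENNReal.div_pos hδ.ne' (by norm_num)
  -- choose the tail cutoff m
  obtain ⟨m, hm⟩ : ∃ m : ℕ, μ {ω | ENNReal.ofReal (ε / 3) ≤ tail m ω} ≤ δ / 8 := by
    set Tb : ℕ → Set Ω := fun m => {ω | ENNReal.ofReal (ε / 3) ≤ tail m ω} with hTb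
    have hTbmeas : ∀ m, NullMeasurableSet (Tb m) μ := fun m =>
      (measurableSet_le measurable_const (htailmeas m)).nullMeasurableSet
    have hTbanti : Antitone Tb := fun m m' hmm' ω hω => le_trans hω (htailanti ω hmm')
    have htendT := tendsto_measure_iInter_atTop hTbmeas hTbanti ⟨0, measure_ne_top μ _⟩
    have hnull : μ (⋂ m, Tb m) = 0 := by
      have hsub : (⋂ m, Tb m) ⊆ {ω | ¬ Tendsto (fun m => tail m ω) atTop (𝓝 0)} := by
        intro ω hω htd
        have hpos : (0 : ℝ≥0∞) < ENNReal.ofReal (ε / 3) :=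
          ENNReal.ofReal_pos.2 (by linarith)
        obtain ⟨m', hm'⟩ := (htd.eventually_lt_const hpos).exists
        exact absurd (Set.mem_iInter.1 hω m') (not_le.2 hm')
      exact measure_mono_null hsub (ae_iff.1 htail0)
    rw [hnull] at htendT
    exact (htendT.eventually_le_const hδ8).exists

  have hδ81 : (0 : ℝ≥0∞) < δ / 8 / (m + 1) := ENNReal.div_pos hδ8.ne' (by simp)
  set ε₁ : ℝ := ε / (3 * (m + 1)) with hε₁def
  have hε₁pos : 0 < ε₁ := by positivity
  -- choose the level M for the finitely many exp (S l)
  obtain ⟨M, hMpos, hM⟩ : ∃ M : ℝ, 0 < M ∧ ∀ l ∈ Finset.range (m + 1),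
      μ {ω | M ≤ Real.exp (S l ω)} ≤ δ / 8 / (m + 1) := by
    choose Ms hMspos hMs using fun l : ℕ =>
      exists_level_small μ (fun ω => Real.exp (S l ω)) (hSmeas l).exp hδ81
    refine ⟨(Finset.range (m + 1)).sup' ⟨0, by simp⟩ Ms, ?_, ?_⟩
    · exact lt_of_lt_of_le (hMspos 0) (Finset.le_sup' Ms (by simp))
    · intro l hl
      refine le_trans (measure_mono ?_) (hMs l)
      intro ω hω
      exact le_trans (Finset.le_sup' Ms hl) hω
  -- choose the level K for d 0
  obtain ⟨K, hKpos, hK⟩ := exists_level_small μ (d 0) (hd_meas 0) hδ8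
  have hε₁M : 0 < ε₁ / M := by positivity
  have hεK : 0 < ε / (3 * K) := by positivity
  -- eventual bounds
  have hev1 : ∀ᶠ n in atTop, ∀ l ∈ Finset.range (m + 1),
      μ {x | ε₁ / M ≤ η (n - l) x} ≤ δ / 8 / (m + 1) := by
    rw [Filter.eventually_all_finset]
    intro l hl
    have hset : ∀ k, {x | ε₁ / M ≤ dist (η k x) ((0 : Ω → ℝ) x)} = {x | ε₁ / M ≤ η k x} := by
      intro k; ext x
      simp [Real.dist_0_eq_abs, abs_of_nonneg (hη_nonneg k x)]
    have h0 := tendstoInMeasure_iff_dist.1 hη_tendsto (ε₁ / M) hε₁M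
    simp_rw [hset] at h0
    exact (tendsto_sub_atTop_nat l).eventually (h0.eventually_le_const hδ81)

  have hev2 : ∀ᶠ n in atTop, μ {ω | ε / (3 * K) ≤ Real.exp (S n ω)} ≤ δ / 8 := by
    have hTIM : TendstoInMeasure μ (fun n ω => Real.exp (S n ω)) atTop (0 : Ω → ℝ) := by
      refine tendstoInMeasure_of_tendsto_ae (fun n => ((hSmeas n).exp).aestronglyMeasurable) ?_
      filter_upwards [hexpS0] with ω hω
      simpa using hω
    have h0 := tendstoInMeasure_iff_dist.1 hTIM (ε / (3 * K)) hεK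
    have hset : ∀ k, {x | ε / (3 * K) ≤ dist (Real.exp (S k x)) ((0 : Ω → ℝ) x)} =
        {ω | ε / (3 * K) ≤ Real.exp (S k ω)} := by
      intro k; ext x
      simp [Real.dist_0_eq_abs, abs_of_nonneg (Real.exp_nonneg (S k x))]
    simp_rw [hset] at h0
    exact h0.eventually_le_const hδ8

  filter_upwards [hev1, hev2, eventually_ge_atTop (m + 1)] with n h1 h2 hn
  -- rewrite the target event and transfer it by measure preservation
  have hTev : μ {x | ε ≤ dist (d n x) ((0 : Ω → ℝ) x)} = μ {ω | ε ≤ d n (θinv^[n] ω)} := by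
    have e1 : {x | ε ≤ dist (d n x) ((0 : Ω → ℝ) x)} = {x | ε ≤ d n x} := by
      ext x
      simp [Real.dist_0_eq_abs, abs_of_nonneg (hd_nonneg n x)]
    rw [e1]
    exact ((hθinv.iterate n).measure_preimage
      (measurableSet_le measurable_const (hd_meas n)).nullMeasurableSet).symm
  rw [hTev]
  -- the good set
  set G : Set Ω := {ω | ∀ l, SR l ω = S l ω} with hGdef
  have hGc : μ Gᶜ = 0 := by
    have := ae_iff.1 hSRS
    simpa [hGdef, Set.compl_setOf] using this
  -- key pointwise inclusion
  have hkey : ∀ ω, ω ∈ G → ε ≤ d n (θinv^[n] ω) →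
      (∃ l ∈ Finset.range (m + 1), M ≤ Real.exp (S l ω) ∨ ε₁ / M ≤ η (n - l) (θinv^[n] ω)) ∨
      ENNReal.ofReal (ε / 3) ≤ tail m ω ∨ K ≤ d 0 (θinv^[n] ω) ∨
      ε / (3 * K) ≤ Real.exp (S n ω) := by
    intro ω hG hE
    have hG' : ∀ l, SR l ω = S l ω := hG
    by_contra hcon
    push_neg at hcon
    obtain ⟨h1', h2', h3', h4'⟩ := hcon
    set y := θinv^[n] ω with hy
    have hmast2 : d n y ≤ (∑ l ∈ Finset.range n, η (n - l) y * Real.exp (S l ω)) +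
        d 0 y * Real.exp (S n ω) := by
      have hthis := hmaster n ω
      rw [hG' n] at hthis
      refine le_trans hthis (le_of_eq ?_)
      congr 1
      exact Finset.sum_congr rfl (fun l _ => by rw [hG' l])
    have hsplit : ∑ l ∈ Finset.range n, η (n - l) y * Real.exp (S l ω) =
        (∑ l ∈ Finset.range (m + 1), η (n - l) y * Real.exp (S l ω)) +
          ∑ l ∈ Finset.Ico (m + 1) n, η (n - l) y * Real.exp (S l ω) := by
      rw [Finset.range_eq_Ico, ← Finset.sum_Ico_consecutive _ (Nat.zero_le (m + 1)) hn,
        ← Finset.range_eq_Ico]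
    have hhead : ∑ l ∈ Finset.range (m + 1), η (n - l) y * Real.exp (S l ω) ≤ ε / 3 := by
      have hterm : ∀ l ∈ Finset.range (m + 1), η (n - l) y * Real.exp (S l ω) ≤ ε₁ := by
        intro l hl
        obtain ⟨ha, hb'⟩ := h1' l hl
        have hlt := mul_lt_mul'' hb' ha (hη_nonneg _ _) (Real.exp_nonneg _)
        rw [div_mul_cancel₀ _ (ne_of_gt hMpos)] at hlt
        exact hlt.le
      have hmne : ((m : ℝ) + 1) ≠ 0 := by positivity
      calc ∑ l ∈ Finset.range (m + 1), η (n - l) y * Real.exp (S l ω)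
          ≤ ∑ _l ∈ Finset.range (m + 1), ε₁ := Finset.sum_le_sum hterm
        _ = ((m : ℝ) + 1) * ε₁ := by
            rw [Finset.sum_const, Finset.card_range, nsmul_eq_mul]; push_cast; ring
        _ = ε / 3 := by rw [hε₁def]; field_simp
    have htailb : ∑ l ∈ Finset.Ico (m + 1) n, η (n - l) y * Real.exp (S l ω) < ε / 3 := by
      have hterm : ∀ l ∈ Finset.Ico (m + 1) n, η (n - l) y * Real.exp (S l ω) ≤
          b (θinv^[l] ω) * Real.exp (S l ω) := by
        intro l hl
        rw [Finset.mem_Ico] at hl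
        have h1n : 1 ≤ n - l := by omega
        have h2n := hη_le (n - l) h1n y
        have h3n : θ^[n - l] y = θinv^[l] ω := by
          rw [hy, L2 (n - l) n ω (by omega)]
          congr 1
          omega
        rw [h3n] at h2n
        exact mul_le_mul_of_nonneg_right h2n (Real.exp_nonneg _)
      have hsum := Finset.sum_le_sum hterm
      have hofreal : ENNReal.ofReal
          (∑ l ∈ Finset.Ico (m + 1) n, b (θinv^[l] ω) * Real.exp (S l ω)) ≤ tail m ω := by
        rw [ENNReal.ofReal_sum_of_nonneg (fun l _ =>
          mul_nonneg (hb_nonneg _) (Real.exp_nonneg _))]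
        have hcongr : ∀ l ∈ Finset.Ico (m + 1) n,
            ENNReal.ofReal (b (θinv^[l] ω) * Real.exp (S l ω)) =
              (fun l => if m < l then F l ω else 0) l := by
          intro l hl
          rw [Finset.mem_Ico] at hl
          show ENNReal.ofReal (b (θinv^[l] ω) * Real.exp (S l ω)) =
            if m < l then F l ω else 0
          rw [if_pos (show m < l by omega), hFdef]
        rw [Finset.sum_congr rfl hcongr, htaildef]
        exact ENNReal.sum_le_tsum _
      have hlt := lt_of_le_of_lt hofreal h2'
      have hnn : (0 : ℝ) ≤ ∑ l ∈ Finset.Ico (m + 1) n, b (θinv^[l] ω) * Real.exp (S l ω) :=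
        Finset.sum_nonneg (fun l _ => mul_nonneg (hb_nonneg _) (Real.exp_nonneg _))
      have hreal : ∑ l ∈ Finset.Ico (m + 1) n, b (θinv^[l] ω) * Real.exp (S l ω) < ε / 3 :=
        (ENNReal.ofReal_lt_ofReal_iff (by linarith)).1 hlt
      exact lt_of_le_of_lt hsum hreal
    have hlast : d 0 y * Real.exp (S n ω) < ε / 3 := by
      have hlt := mul_lt_mul'' h3' h4' (hd_nonneg 0 y) (Real.exp_nonneg _)
      have hKeq : K * (ε / (3 * K)) = ε / 3 := by field_simp
      rw [hKeq] at hlt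
      exact hlt
    rw [hsplit] at hmast2
    linarith

  -- convert to a measure estimate
  set E : Set Ω := {ω | ε ≤ d n (θinv^[n] ω)} with hEdef
  set U1 : Set Ω := ⋃ l ∈ Finset.range (m + 1),
    ({ω | M ≤ Real.exp (S l ω)} ∪ {ω | ε₁ / M ≤ η (n - l) (θinv^[n] ω)}) with hU1
  set U2 : Set Ω := {ω | ENNReal.ofReal (ε / 3) ≤ tail m ω} with hU2
  set U3 : Set Ω := {ω | K ≤ d 0 (θinv^[n] ω)} with hU3
  set U4 : Set Ω := {ω | ε / (3 * K) ≤ Real.exp (S n ω)} with hU4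
  have hsub : E ⊆ (E ∩ G) ∪ Gᶜ := by
    intro ω hω
    by_cases hg : ω ∈ G
    · exact Or.inl ⟨hω, hg⟩
    · exact Or.inr hg
  have hsub2 : E ∩ G ⊆ U1 ∪ (U2 ∪ (U3 ∪ U4)) := by
    rintro ω ⟨hωE, hωG⟩
    rcases hkey ω hωG hωE with ⟨l, hl, hor⟩ | h | h | h
    · refine Or.inl (Set.mem_biUnion hl ?_)
      rcases hor with h | h
      · exact Or.inl h
      · exact Or.inr h
    · exact Or.inr (Or.inl h)
    · exact Or.inr (Or.inr (Or.inl h))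
    · exact Or.inr (Or.inr (Or.inr h))
  have hU1le : μ U1 ≤ δ / 8 + δ / 8 := by
    refine le_trans (measure_biUnion_finset_le _ _) ?_
    have hterm : ∀ l ∈ Finset.range (m + 1),
        μ ({ω | M ≤ Real.exp (S l ω)} ∪ {ω | ε₁ / M ≤ η (n - l) (θinv^[n] ω)}) ≤
          δ / 8 / (m + 1) + δ / 8 / (m + 1) := by
      intro l hl
      refine le_trans (measure_union_le _ _) (add_le_add (hM l hl) ?_)
      have htr : μ {ω | ε₁ / M ≤ η (n - l) (θinv^[n] ω)} = μ {x | ε₁ / M ≤ η (n - l) x} :=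
        (hθinv.iterate n).measure_preimage
          (measurableSet_le measurable_const (hη_meas (n - l))).nullMeasurableSet
      rw [htr]
      exact h1 l hl
    refine le_trans (Finset.sum_le_sum hterm) ?_
    rw [Finset.sum_const, Finset.card_range, nsmul_eq_mul, mul_add]
    have hne0 : ((m : ℝ≥0∞) + 1) ≠ 0 :=
      ne_of_gt (lt_of_lt_of_le zero_lt_one le_add_self)
    have hnetop : ((m : ℝ≥0∞) + 1) ≠ ∞ :=
      ENNReal.add_ne_top.2 ⟨ENNReal.natCast_ne_top m, ENNReal.one_ne_top⟩
    have hmul : ((m + 1 : ℕ) : ℝ≥0∞) * (δ / 8 / ((m : ℝ≥0∞) + 1)) = δ / 8 := by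
      push_cast
      exact ENNReal.mul_div_cancel hne0 hnetop
    rw [hmul]
  have hU2le : μ U2 ≤ δ / 8 := hm
  have hU3le : μ U3 ≤ δ / 8 := by
    have htr : μ U3 = μ {x | K ≤ d 0 x} :=
      (hθinv.iterate n).measure_preimage
        (measurableSet_le measurable_const (hd_meas 0)).nullMeasurableSet
    rw [htr]
    exact hK
  have hU4le : μ U4 ≤ δ / 8 := h2
  calc μ E ≤ μ ((E ∩ G) ∪ Gᶜ) := measure_mono hsub
    _ ≤ μ (E ∩ G) + μ Gᶜ := measure_union_le _ _
    _ ≤ μ (U1 ∪ (U2 ∪ (U3 ∪ U4))) + 0 := by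
        rw [hGc]
        exact add_le_add_left (measure_mono hsub2) 0
    _ = μ (U1 ∪ (U2 ∪ (U3 ∪ U4))) := add_zero _
    _ ≤ μ U1 + (μ U2 + (μ U3 + μ U4)) := by
        refine le_trans (measure_union_le _ _) ?_
        refine add_le_add le_rfl ?_
        refine le_trans (measure_union_le _ _) ?_
        exact add_le_add le_rfl (measure_union_le _ _)
    _ ≤ (δ / 8 + δ / 8) + (δ / 8 + (δ / 8 + δ / 8)) := by
        exact add_le_add hU1le (add_le_add hU2le (add_le_add hU3le hU4le))
    _ = 5 * (δ / 8) := by ring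
    _ ≤ 8 * (δ / 8) := by
        refine mul_le_mul_left ?_ _
        norm_num
    _ = δ := ENNReal.mul_div_cancel' (by norm_num) (by norm_num)
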